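/- Lemma (set C≤, restricted model). Let q ∈ Prob({0,1}²) and μ := μ₂. Then the set C≤ := {(π₁, χ^{(2)}_{1|1} − χ^{(1)}_{1|1}) : (π,χ) ∈ Θ₂, μ(π,χ) = q, χ^{(1)}_{0|0} ≤ χ^{(2)}_{0|0}} is nonempty and equals the set of all (Pr, ΔSe) ∈ [0,1] × [−1,1] satisfying q₀₁ − q₁₀ ≤ Pr·ΔSe ≤ min(q₀₁, q₀₁ − q₁₀ + 1 − Pr). -/

import Mathlib

open scoped BigOperators

noncomputable section

/-- `p` is a discrete probability density on the finite set `X`,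
i.e. a function `X → [0,1]` summing to `1`. -/
def IsProb {X : Type*} [Fintype X] (p : X → ℝ) : Prop :=
  (∀ x, 0 ≤ p x ∧ p x ≤ 1) ∧ ∑ x, p x = 1

/-- `χ` is a Markov transition density: `χ x` is a probability density for each `x`. -/
def IsMarkov {X Y : Type*} [Fintype Y] (χ : X → Y → ℝ) : Prop :=
  ∀ x, IsProb (χ x)

/-- The mixture density `μ₁(π,χ)` on `{0,1}` (indices: `χ i j = χ_{j|i}`). -/
def mu1 (π : Fin 2 → ℝ) (χ : Fin 2 → Fin 2 → ℝ) : Fin 2 → ℝ :=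
  fun j => ∑ i, π i * χ i j

/-- The mixture density `μ₂(π,χ)` on `{0,1}²` (indices: `χ i j = χ_{j|i}`). -/
def mu2 (π : Fin 2 → ℝ) (χ : Fin 2 → Fin 2 × Fin 2 → ℝ) : Fin 2 × Fin 2 → ℝ :=
  fun j => ∑ i, π i * χ i j

/-- First-test characteristic: `chi1 χ i ι = χ^{(1)}_{ι|i} = χ_{ι0|i} + χ_{ι1|i}`. -/
def chi1 (χ : Fin 2 → Fin 2 × Fin 2 → ℝ) : Fin 2 → Fin 2 → ℝ :=
  fun i ι => χ i (ι, 0) + χ i (ι, 1)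

/-- Second-test characteristic: `chi2 χ i ι = χ^{(2)}_{ι|i} = χ_{0ι|i} + χ_{1ι|i}`. -/
def chi2 (χ : Fin 2 → Fin 2 × Fin 2 → ℝ) : Fin 2 → Fin 2 → ℝ :=
  fun i ι => χ i (0, ι) + χ i (1, ι)

/-- The multinomial point mass `M_{n,q}({k}) = n! ∏_x q_x^{k_x}/k_x!`. -/
def mPMF {X : Type*} [Fintype X] (n : ℕ) (q : X → ℝ) (k : X → ℕ) : ℝ :=
  (n.factorial : ℝ) * ∏ x, q x ^ k x / ((k x).factorial : ℝ)

/-- `mProb n q S` is the probability, under the multinomial distribution `M_{n,q}`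
(supported on `{k : Σ_x k_x = n}`), of the event `S`. -/
def mProb {X : Type*} [Fintype X] (n : ℕ) (q : X → ℝ) (S : Set (X → ℕ)) : ℝ :=
  ∑' k : X → ℕ, Set.indicator {k | (∑ x, k x) = n ∧ k ∈ S} (mPMF n q) k


noncomputable def row (a b c d : ℝ) : Fin 2 × Fin 2 → ℝ :=
  fun p => ![![a, b], ![c, d]] p.1 p.2

lemma row_isProb (a b c d : ℝ) (ha : 0 ≤ a) (hb : 0 ≤ b) (hc : 0 ≤ c) (hd : 0 ≤ d)
    (hs : a + b + c + d = 1) : IsProb (row a b c d) := by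
  constructor
  · intro p; fin_cases p <;> simp [row] <;> constructor <;> linarith
  · rw [Fintype.sum_prod_type]; simp [Fin.sum_univ_two, row]; linarith

lemma mem_of (q : Fin 2 × Fin 2 → ℝ) (Pr ΔSe a0 b0 c0 d0 a1 b1 c1 d1 : ℝ)
    (hPr0 : 0 ≤ Pr) (hPr1 : Pr ≤ 1)
    (ha0 : 0 ≤ a0) (hb0 : 0 ≤ b0) (hc0 : 0 ≤ c0) (hd0 : 0 ≤ d0)
    (ha1 : 0 ≤ a1) (hb1 : 0 ≤ b1) (hc1 : 0 ≤ c1) (hd1 : 0 ≤ d1)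
    (hs0 : a0 + b0 + c0 + d0 = 1) (hs1 : a1 + b1 + c1 + d1 = 1)
    (hm00 : (1-Pr)*a0 + Pr*a1 = q (0,0))
    (hm01 : (1-Pr)*b0 + Pr*b1 = q (0,1))
    (hm10 : (1-Pr)*c0 + Pr*c1 = q (1,0))
    (hm11 : (1-Pr)*d0 + Pr*d1 = q (1,1))
    (hbc : b0 ≤ c0) (hΔ : b1 - c1 = ΔSe) :
    ∃ π : Fin 2 → ℝ, ∃ χ : Fin 2 → Fin 2 × Fin 2 → ℝ,
      IsProb π ∧ IsMarkov χ ∧ mu2 π χ = q ∧ chi1 χ 0 0 ≤ chi2 χ 0 0 ∧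
      ((Pr, ΔSe) : ℝ × ℝ) = (π 1, chi2 χ 1 1 - chi1 χ 1 1) := by
  refine ⟨![1-Pr, Pr], ![row a0 b0 c0 d0, row a1 b1 c1 d1], ⟨?_, ?_⟩, ?_, ?_, ?_, ?_⟩
  · intro x; fin_cases x <;> simp <;> constructor <;> linarith
  · simp [Fin.sum_univ_two]
  · intro i; fin_cases i
    · exact row_isProb a0 b0 c0 d0 ha0 hb0 hc0 hd0 hs0
    · exact row_isProb a1 b1 c1 d1 ha1 hb1 hc1 hd1 hs1
  · have hm00' : (1-Pr)*a0 + Pr*a1 = q 0 := by rw [← Prod.mk_zero_zero]; exact hm00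
    have hm11' : (1-Pr)*d0 + Pr*d1 = q 1 := by rw [← Prod.mk_one_one]; exact hm11
    funext p; fin_cases p <;> simp [mu2, Fin.sum_univ_two, row] <;> linarith
  · simp [chi1, chi2, row]; linarith
  · simp [chi1, chi2, row, Prod.ext_iff]; linarith

set_option maxHeartbeats 1000000 in
lemma construct_mid (q : Fin 2 × Fin 2 → ℝ) (Pr Δ : ℝ)
    (q00n : 0 ≤ q (0,0)) (q01n : 0 ≤ q (0,1)) (q10n : 0 ≤ q (1,0)) (q11n : 0 ≤ q (1,1))
    (qsum : q (0,0) + q (0,1) + q (1,0) + q (1,1) = 1)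
    (hPpos : 0 < Pr) (hPlt1 : Pr < 1) (hΔ0 : -1 ≤ Δ) (hΔ1 : Δ ≤ 1)
    (hlb : q (0,1) - q (1,0) ≤ Pr * Δ) (hub1 : Pr * Δ ≤ q (0,1))
    (hub2 : Pr * Δ ≤ q (0,1) - q (1,0) + 1 - Pr) :
    ∃ π : Fin 2 → ℝ, ∃ χ : Fin 2 → Fin 2 × Fin 2 → ℝ,
      IsProb π ∧ IsMarkov χ ∧ mu2 π χ = q ∧ chi1 χ 0 0 ≤ chi2 χ 0 0 ∧
      ((Pr, Δ) : ℝ × ℝ) = (π 1, chi2 χ 1 1 - chi1 χ 1 1) := by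
  obtain ⟨s, hs⟩ : ∃ x : ℝ, x = Pr * Δ := ⟨_, rfl⟩
  rw [← hs] at hlb hub1 hub2
  obtain ⟨T, hT⟩ : ∃ x : ℝ, x = max |s| (q (0,1) + q (1,0) + Pr - 1) := ⟨_, rfl⟩
  have hsT : s ≤ T := hT ▸ le_trans (le_abs_self s) (le_max_left _ _)
  have hsT' : -s ≤ T := hT ▸ le_trans (neg_le_abs s) (le_max_left _ _)
  have hT2 : q (0,1) + q (1,0) + Pr - 1 ≤ T := hT ▸ le_max_right _ _
  have habs : |s| ≤ Pr := by
    rw [abs_le, hs]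
    constructor
    · nlinarith only [hPpos, hΔ0]
    · nlinarith only [hPpos, hΔ1]
  have hTPr : T ≤ Pr := hT ▸ max_le habs (by linarith only [qsum, q00n, q11n])
  have hTq01 : T ≤ 2 * q (0,1) - s := by
    rw [hT]
    apply max_le
    · rw [abs_le]
      constructor
      · linarith only [q01n]
      · linarith only [hub1]
    · linarith only [hub2]
  have hTq10 : T ≤ 2 * q (1,0) + s := by
    rw [hT]
    apply max_le
    · rw [abs_le]
      constructor
      · linarith only [hlb, q01n]
      · linarith only [q10n]
    · linarith only [hlb, hPlt1]
  obtain ⟨β, hβ⟩ : ∃ x : ℝ, x = (T + s)/2 := ⟨_, rfl⟩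
  obtain ⟨γ, hγ⟩ : ∃ x : ℝ, x = (T - s)/2 := ⟨_, rfl⟩
  have hβ0 : 0 ≤ β := by rw [hβ]; linarith only [hsT']
  have hγ0 : 0 ≤ γ := by rw [hγ]; linarith only [hsT]
  have hβq : β ≤ q (0,1) := by rw [hβ]; linarith only [hTq01]
  have hγq : γ ≤ q (1,0) := by rw [hγ]; linarith only [hTq10]
  have hβγPr : β + γ ≤ Pr := by rw [hβ, hγ]; linarith only [hTPr]
  have hβγlow : q (0,1) + q (1,0) - (β + γ) ≤ 1 - Pr := by rw [hβ, hγ]; linarith only [hT2]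
  have hβγs : β - γ = s := by rw [hβ, hγ]; ring
  have hPr' : Pr ≠ 0 := ne_of_gt hPpos
  have hp0 : (0:ℝ) < 1 - Pr := by linarith only [hPlt1]
  have hp0' : (1:ℝ) - Pr ≠ 0 := ne_of_gt hp0
  obtain ⟨b1, hb1⟩ : ∃ x : ℝ, x = β / Pr := ⟨_, rfl⟩
  obtain ⟨c1, hc1⟩ : ∃ x : ℝ, x = γ / Pr := ⟨_, rfl⟩
  obtain ⟨b0, hb0⟩ : ∃ x : ℝ, x = (q (0,1) - β) / (1 - Pr) := ⟨_, rfl⟩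
  obtain ⟨c0, hc0⟩ : ∃ x : ℝ, x = (q (1,0) - γ) / (1 - Pr) := ⟨_, rfl⟩
  have eb1 : Pr * b1 = β := by rw [hb1]; field_simp
  have ec1 : Pr * c1 = γ := by rw [hc1]; field_simp
  have eb0 : (1 - Pr) * b0 = q (0,1) - β := by rw [hb0]; field_simp
  have ec0 : (1 - Pr) * c0 = q (1,0) - γ := by rw [hc0]; field_simp
  have hb1n : 0 ≤ b1 := by rw [hb1]; exact div_nonneg hβ0 hPpos.le
  have hc1n : 0 ≤ c1 := by rw [hc1]; exact div_nonneg hγ0 hPpos.le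
  have hb0n : 0 ≤ b0 := by
    rw [hb0]; exact div_nonneg (by linarith only [hβq]) hp0.le
  have hc0n : 0 ≤ c0 := by
    rw [hc0]; exact div_nonneg (by linarith only [hγq]) hp0.le
  have hbc11 : b1 + c1 ≤ 1 := by
    rw [hb1, hc1, ← add_div, div_le_one hPpos]; linarith only [hβγPr]
  have hbc00 : b0 + c0 ≤ 1 := by
    rw [hb0, hc0, ← add_div, div_le_one hp0]; linarith only [hβγlow]
  have hbc : b0 ≤ c0 := by
    rw [hb0, hc0, div_le_div_iff₀ hp0 hp0]
    have h1 : q (0,1) - β ≤ q (1,0) - γ := by linarith only [hβγs, hlb]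
    nlinarith only [h1, hp0]
  have hΔeq : b1 - c1 = Δ := by
    rw [hb1, hc1, div_sub_div_same, hβγs, hs, mul_div_assoc]
    field_simp
  have hr1n : 0 ≤ 1 - b1 - c1 := by linarith only [hbc11]
  have hr0n : 0 ≤ 1 - b0 - c0 := by linarith only [hbc00]
  have hkey : (1 - Pr) * (1 - b0 - c0) + Pr * (1 - b1 - c1) = q (0,0) + q (1,1) := by
    linear_combination -eb0 - ec0 - eb1 - ec1 - qsum
  rcases eq_or_lt_of_le (by linarith only [q00n, q11n] : (0:ℝ) ≤ q (0,0) + q (1,1)) with hQ | hQ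
  · have h00 : q (0,0) = 0 := by linarith only [hQ, q00n, q11n]
    have h11 : q (1,1) = 0 := by linarith only [hQ, q00n, q11n]
    exact mem_of q Pr Δ 0 b0 c0 (1 - b0 - c0) 0 b1 c1 (1 - b1 - c1) hPpos.le hPlt1.le
      le_rfl hb0n hc0n hr0n le_rfl hb1n hc1n hr1n
      (by ring) (by ring)
      (by rw [h00]; ring) (by linarith only [eb0, eb1]) (by linarith only [ec0, ec1])
      (by rw [h11]; linarith only [hkey, h00, h11]) hbc hΔeq
  · have hQ' : q (0,0) + q (1,1) ≠ 0 := ne_of_gt hQ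
    have ha0n : 0 ≤ (1 - b0 - c0) * q (0,0) / (q (0,0) + q (1,1)) :=
      div_nonneg (mul_nonneg hr0n q00n) hQ.le
    have hd0n : 0 ≤ (1 - b0 - c0) * q (1,1) / (q (0,0) + q (1,1)) :=
      div_nonneg (mul_nonneg hr0n q11n) hQ.le
    have ha1n : 0 ≤ (1 - b1 - c1) * q (0,0) / (q (0,0) + q (1,1)) :=
      div_nonneg (mul_nonneg hr1n q00n) hQ.le
    have hd1n : 0 ≤ (1 - b1 - c1) * q (1,1) / (q (0,0) + q (1,1)) :=
      div_nonneg (mul_nonneg hr1n q11n) hQ.le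
    have had0 : (1 - b0 - c0) * q (0,0) / (q (0,0) + q (1,1))
        + (1 - b0 - c0) * q (1,1) / (q (0,0) + q (1,1)) = 1 - b0 - c0 := by
      rw [← add_div, ← mul_add, mul_div_assoc, div_self hQ', mul_one]
    have had1 : (1 - b1 - c1) * q (0,0) / (q (0,0) + q (1,1))
        + (1 - b1 - c1) * q (1,1) / (q (0,0) + q (1,1)) = 1 - b1 - c1 := by
      rw [← add_div, ← mul_add, mul_div_assoc, div_self hQ', mul_one]
    have hma : (1 - Pr) * ((1 - b0 - c0) * q (0,0) / (q (0,0) + q (1,1)))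
        + Pr * ((1 - b1 - c1) * q (0,0) / (q (0,0) + q (1,1))) = q (0,0) := by
      have h : (1 - Pr) * ((1 - b0 - c0) * q (0,0) / (q (0,0) + q (1,1)))
          + Pr * ((1 - b1 - c1) * q (0,0) / (q (0,0) + q (1,1)))
          = ((1 - Pr) * (1 - b0 - c0) + Pr * (1 - b1 - c1))
            * (q (0,0) / (q (0,0) + q (1,1))) := by ring
      rw [h, hkey, mul_comm, div_mul_cancel₀ _ hQ']
    have hmd : (1 - Pr) * ((1 - b0 - c0) * q (1,1) / (q (0,0) + q (1,1)))
        + Pr * ((1 - b1 - c1) * q (1,1) / (q (0,0) + q (1,1))) = q (1,1) := by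
      have h : (1 - Pr) * ((1 - b0 - c0) * q (1,1) / (q (0,0) + q (1,1)))
          + Pr * ((1 - b1 - c1) * q (1,1) / (q (0,0) + q (1,1)))
          = ((1 - Pr) * (1 - b0 - c0) + Pr * (1 - b1 - c1))
            * (q (1,1) / (q (0,0) + q (1,1))) := by ring
      rw [h, hkey, mul_comm, div_mul_cancel₀ _ hQ']
    exact mem_of q Pr Δ
      ((1 - b0 - c0) * q (0,0) / (q (0,0) + q (1,1))) b0 c0
      ((1 - b0 - c0) * q (1,1) / (q (0,0) + q (1,1)))
      ((1 - b1 - c1) * q (0,0) / (q (0,0) + q (1,1))) b1 c1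
      ((1 - b1 - c1) * q (1,1) / (q (0,0) + q (1,1)))
      hPpos.le hPlt1.le
      ha0n hb0n hc0n hd0n ha1n hb1n hc1n hd1n
      (by linarith only [had0]) (by linarith only [had1])
      hma (by linarith only [eb0, eb1]) (by linarith only [ec0, ec1]) hmd hbc hΔeq

/-- Lemma (set C≤, restricted model): the set of pairs `(Pr, ΔSe)` compatible with `q`
under the restriction `Sp₁ ≤ Sp₂`. -/
theorem stmt_13 (q : Fin 2 × Fin 2 → ℝ) (hq : IsProb q) :
    Set.Nonempty {x : ℝ × ℝ |
        ∃ π : Fin 2 → ℝ, ∃ χ : Fin 2 → Fin 2 × Fin 2 → ℝ,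
          IsProb π ∧ IsMarkov χ ∧ mu2 π χ = q ∧ chi1 χ 0 0 ≤ chi2 χ 0 0 ∧
          x = (π 1, chi2 χ 1 1 - chi1 χ 1 1)} ∧
    {x : ℝ × ℝ |
        ∃ π : Fin 2 → ℝ, ∃ χ : Fin 2 → Fin 2 × Fin 2 → ℝ,
          IsProb π ∧ IsMarkov χ ∧ mu2 π χ = q ∧ chi1 χ 0 0 ≤ chi2 χ 0 0 ∧
          x = (π 1, chi2 χ 1 1 - chi1 χ 1 1)} =
    {x : ℝ × ℝ |
        x.1 ∈ Set.Icc (0:ℝ) 1 ∧ x.2 ∈ Set.Icc (-1:ℝ) 1 ∧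
        q (0, 1) - q (1, 0) ≤ x.1 * x.2 ∧
        x.1 * x.2 ≤ min (q (0, 1)) (q (0, 1) - q (1, 0) + 1 - x.1)} := by
  obtain ⟨hqb, hqs⟩ := hq
  have q00n := (hqb (0,0)).1
  have q01n := (hqb (0,1)).1
  have q10n := (hqb (1,0)).1
  have q11n := (hqb (1,1)).1
  have q00u := (hqb (0,0)).2
  have q01u := (hqb (0,1)).2
  have q10u := (hqb (1,0)).2
  have q11u := (hqb (1,1)).2
  have qsum : q (0,0) + q (0,1) + q (1,0) + q (1,1) = 1 := by
    rw [Fintype.sum_prod_type] at hqs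
    simp only [Fin.sum_univ_two] at hqs
    linarith
  constructor
  · refine ⟨(1, q (0,1) - q (1,0)), ?_⟩
    exact mem_of q 1 (q (0,1) - q (1,0)) 1 0 0 0 (q (0,0)) (q (0,1)) (q (1,0)) (q (1,1))
      zero_le_one le_rfl zero_le_one le_rfl le_rfl le_rfl q00n q01n q10n q11n
      (by ring) (by linarith) (by ring) (by ring) (by ring) (by ring) le_rfl rfl
  · apply Set.Subset.antisymm
    · -- forward
      rintro ⟨Pr, Δ⟩ ⟨π, χ, ⟨hπb, hπs⟩, hχ, hmu, hbc, hx⟩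
      have hπ0 := (hπb 0).1
      have hπ1 := (hπb 1).1
      have hπs2 : π 0 + π 1 = 1 := by simpa [Fin.sum_univ_two] using hπs
      obtain ⟨hχ0b, hχ0s⟩ := hχ 0
      obtain ⟨hχ1b, hχ1s⟩ := hχ 1
      have hs0 : χ 0 (0,0) + χ 0 (0,1) + χ 0 (1,0) + χ 0 (1,1) = 1 := by
        rw [Fintype.sum_prod_type] at hχ0s
        simp only [Fin.sum_univ_two] at hχ0s
        linarith
      have hs1 : χ 1 (0,0) + χ 1 (0,1) + χ 1 (1,0) + χ 1 (1,1) = 1 := by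
        rw [Fintype.sum_prod_type] at hχ1s
        simp only [Fin.sum_univ_two] at hχ1s
        linarith
      have hm01 : π 0 * χ 0 (0,1) + π 1 * χ 1 (0,1) = q (0,1) := by
        have := congrFun hmu (0,1); simpa [mu2, Fin.sum_univ_two] using this
      have hm10 : π 0 * χ 0 (1,0) + π 1 * χ 1 (1,0) = q (1,0) := by
        have := congrFun hmu (1,0); simpa [mu2, Fin.sum_univ_two] using this
      have hbc' : χ 0 (0,0) + χ 0 (0,1) ≤ χ 0 (0,0) + χ 0 (1,0) := by
        simpa [chi1, chi2] using hbc
      have hΔ : Δ = χ 1 (0,1) - χ 1 (1,0) := by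
        have h2 := congrArg Prod.snd hx
        simp only [chi1, chi2] at h2
        linarith
      have hPr : Pr = π 1 := congrArg Prod.fst hx
      have b0n := (hχ0b (0,1)).1
      have c0n := (hχ0b (1,0)).1
      have b1n := (hχ1b (0,1)).1
      have c1n := (hχ1b (1,0)).1
      have a0n := (hχ0b (0,0)).1
      have d0n := (hχ0b (1,1)).1
      have a1n := (hχ1b (0,0)).1
      have d1n := (hχ1b (1,1)).1
      subst hPr hΔ
      simp only [Set.mem_setOf_eq, Set.mem_Icc]
      refine ⟨⟨hπ1, by linarith⟩, ⟨by linarith, by linarith⟩, ?_, le_min ?_ ?_⟩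
      · nlinarith [mul_nonneg hπ0 (by linarith : (0:ℝ) ≤ χ 0 (1,0) - χ 0 (0,1))]
      · nlinarith [mul_nonneg hπ0 b0n, mul_nonneg hπ1 c1n]
      · nlinarith [mul_nonneg hπ0 (by linarith : (0:ℝ) ≤ 1 - (χ 0 (1,0) - χ 0 (0,1)))]
    · -- backward
      rintro ⟨Pr, Δ⟩ ⟨⟨hP0, hP1⟩, ⟨hΔ0, hΔ1⟩, hlb, hub⟩
      obtain ⟨hub1, hub2⟩ := le_min_iff.mp hub
      have hlb' : q (0,1) - q (1,0) ≤ Pr * Δ := hlb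
      have hub1' : Pr * Δ ≤ q (0,1) := hub1
      have hub2' : Pr * Δ ≤ q (0,1) - q (1,0) + 1 - Pr := hub2
      have hP0' : (0:ℝ) ≤ Pr := hP0
      have hP1' : Pr ≤ 1 := hP1
      have hΔ0' : (-1:ℝ) ≤ Δ := hΔ0
      have hΔ1' : Δ ≤ 1 := hΔ1
      simp only [Set.mem_setOf_eq]
      rcases eq_or_lt_of_le hP0' with h0 | hPpos
      · obtain rfl : Pr = 0 := h0.symm
        have hbc : q (0,1) ≤ q (1,0) := by linarith only [hlb']
        rcases le_total 0 Δ with hΔp | hΔn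
        · exact mem_of q 0 Δ (q (0,0)) (q (0,1)) (q (1,0)) (q (1,1)) (1-Δ) Δ 0 0
            le_rfl zero_le_one q00n q01n q10n q11n (by linarith) hΔp le_rfl le_rfl
            qsum (by ring) (by ring) (by ring) (by ring) (by ring) hbc (by ring)
        · exact mem_of q 0 Δ (q (0,0)) (q (0,1)) (q (1,0)) (q (1,1)) (1+Δ) 0 (-Δ) 0
            le_rfl zero_le_one q00n q01n q10n q11n (by linarith) le_rfl (by linarith) le_rfl
            qsum (by ring) (by ring) (by ring) (by ring) (by ring) hbc (by ring)
      · rcases eq_or_lt_of_le hP1' with h1 | hPlt1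
        · subst h1
          exact mem_of q 1 Δ 1 0 0 0 (q (0,0)) (q (0,1)) (q (1,0)) (q (1,1))
            zero_le_one le_rfl zero_le_one le_rfl le_rfl le_rfl q00n q01n q10n q11n
            (by ring) qsum (by ring) (by ring) (by ring) (by ring) le_rfl (by linarith only [hlb', hub2'])
        · exact construct_mid q Pr Δ q00n q01n q10n q11n qsum hPpos hPlt1 hΔ0' hΔ1'
            hlb' hub1' hub2'

end
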